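/- (Lemma 1, main bound.) For every λ > 0, (1/n) log 𝔼[exp(λ S_n)] ≤ B(λ; c_*, v̄, K, K_1) = (1/2) λ² v̄ + λ² K (f_2(λ c_*) − 1/2) − λ⁴ c_*² K_1 f_4(λ c_*). -/

import Mathlib

open MeasureTheory ProbabilityTheory Real Finset

/-- `f k u = ∑_{j=0}^∞ u^j / (j+k)!`. -/
noncomputable def fSeries (k : ℕ) (u : ℝ) : ℝ := ∑' j : ℕ, u ^ j / (Nat.factorial (j + k) : ℝ)

lemma summable_fSeries (k : ℕ) (u : ℝ) :
    Summable (fun j : ℕ => u ^ j / (Nat.factorial (j + k) : ℝ)) := by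
  apply Summable.of_norm
  apply Summable.of_nonneg_of_le (fun j => norm_nonneg _)
    (fun j => ?_) (Real.summable_pow_div_factorial |u|)
  rw [norm_div, norm_pow, Real.norm_eq_abs, Real.norm_natCast]
  apply div_le_div_of_nonneg_left (by positivity) (by positivity)
  exact_mod_cast Nat.factorial_le (Nat.le_add_right j k)

lemma exp_eq_fSeries (s : ℝ) : Real.exp s = 1 + s + s ^ 2 * fSeries 2 s := by
  have h : Real.exp s = ∑' j : ℕ, s ^ j / (Nat.factorial j : ℝ) := by
    rw [Real.exp_eq_exp_ℝ, NormedSpace.exp_eq_tsum_div]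
  have hs : Summable (fun j : ℕ => s ^ j / (Nat.factorial j : ℝ)) := by
    simpa using summable_fSeries 0 s
  have h2 : s ^ 2 * fSeries 2 s = ∑' j : ℕ, s ^ (j + 2) / (Nat.factorial (j + 2) : ℝ) := by
    rw [fSeries, ← tsum_mul_left]
    congr 1; ext j; rw [pow_add]; ring
  rw [h, ← Summable.sum_add_tsum_nat_add 2 hs, h2]
  simp [Finset.sum_range_succ]

lemma fSeries_mono {k : ℕ} {s u : ℝ} (hs : 0 ≤ s) (hsu : s ≤ u) :
    fSeries k s ≤ fSeries k u := by
  apply Summable.tsum_le_tsum _ (summable_fSeries k s) (summable_fSeries k u)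
  intro j
  gcongr

lemma fSeries_ge {k : ℕ} {u : ℝ} (hu : 0 ≤ u) :
    1 / (Nat.factorial k : ℝ) ≤ fSeries k u := by
  have := Summable.le_tsum (summable_fSeries k u) 0 (fun j _ => by positivity)
  simpa [fSeries] using this

lemma exp_le_quadratic {s : ℝ} (hs : s ≤ 0) : Real.exp s ≤ 1 + s + s ^ 2 / 2 := by
  have hmono : AntitoneOn (fun x : ℝ => 1 + x + x ^ 2 / 2 - Real.exp x) (Set.Iic (0:ℝ)) := by
    apply antitoneOn_of_deriv_nonpos (convex_Iic 0)
    · fun_prop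
    · fun_prop
    · intro x hx
      have hd : HasDerivAt (fun x : ℝ => 1 + x + x ^ 2 / 2 - Real.exp x)
          (0 + 1 + (↑2 * x ^ (2 - 1)) / 2 - Real.exp x) x :=
        (((hasDerivAt_const x (1:ℝ)).add (hasDerivAt_id' x)).add
          ((hasDerivAt_pow 2 x).div_const 2)).sub (Real.hasDerivAt_exp x)
      rw [hd.deriv]
      have := Real.add_one_le_exp x
      norm_num
      linarith
  have h0 : (1:ℝ) + 0 + 0 ^ 2 / 2 - Real.exp 0 ≤ 1 + s + s ^ 2 / 2 - Real.exp s :=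
    hmono (Set.mem_Iic.2 hs) (Set.mem_Iic.2 le_rfl) hs
  simp [Real.exp_zero] at h0
  linarith

lemma exp_pointwise {s u : ℝ} (hu : 0 ≤ u) (hsu : s ≤ u) :
    Real.exp s ≤ 1 + s + s ^ 2 * fSeries 2 u := by
  rcases le_or_gt s 0 with h | h
  · have h1 := exp_le_quadratic h
    have h2 : 1 / (Nat.factorial 2 : ℝ) ≤ fSeries 2 u := fSeries_ge hu
    norm_num at h2
    nlinarith [sq_nonneg s]
  · rw [exp_eq_fSeries s]
    have : fSeries 2 s ≤ fSeries 2 u := fSeries_mono h.le hsu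
    nlinarith [sq_nonneg s]

lemma key_ineq {u θ : ℝ} (hu : 0 ≤ u) (hθ : 0 ≤ θ) (hθ1 : θ ≤ 1) :
    fSeries 2 (θ * u) + u ^ 2 * θ * (1 - θ) * fSeries 4 u ≤ (1 - θ) / 2 + θ * fSeries 2 u := by
  set g : ℕ → ℝ := fun j => θ * (u ^ j / (Nat.factorial (j + 2) : ℝ))
      - (θ * u) ^ j / (Nat.factorial (j + 2) : ℝ) with hgdef
  have hg : Summable g :=
    ((summable_fSeries 2 u).mul_left θ).sub (summable_fSeries 2 (θ * u))
  have htsumg : ∑' j, g j = θ * fSeries 2 u - fSeries 2 (θ * u) := by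
    rw [hgdef, Summable.tsum_sub ((summable_fSeries 2 u).mul_left θ) (summable_fSeries 2 (θ * u)),
      tsum_mul_left]
    rfl
  have hshift : ∑' j : ℕ, g (j + 2) = θ * fSeries 2 u - fSeries 2 (θ * u) + (1 - θ) / 2 := by
    have := Summable.sum_add_tsum_nat_add 2 hg
    rw [htsumg] at this
    have h01 : ∑ j ∈ Finset.range 2, g j = θ / 2 - 1 / 2 := by
      simp [hgdef, Finset.sum_range_succ, Nat.factorial]
      ring
    linarith
  have hL : u ^ 2 * θ * (1 - θ) * fSeries 4 u
      = ∑' j : ℕ, u ^ 2 * θ * (1 - θ) * (u ^ j / (Nat.factorial (j + 4) : ℝ)) := by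
    rw [fSeries, ← tsum_mul_left]
  have hterm : ∀ j : ℕ, u ^ 2 * θ * (1 - θ) * (u ^ j / (Nat.factorial (j + 4) : ℝ)) ≤ g (j + 2) := by
    intro j
    have hfac : ((j + 2) + 2) = j + 4 := by omega
    have hθpow : θ ^ (j + 2) ≤ θ ^ 2 := by
      calc θ ^ (j + 2) = θ ^ 2 * θ ^ j := by ring
      _ ≤ θ ^ 2 * 1 := by
          apply mul_le_mul_of_nonneg_left (pow_le_one₀ hθ hθ1) (by positivity)
      _ = θ ^ 2 := by ring
    simp only [hgdef, hfac, mul_pow]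
    have hfp : (0:ℝ) < (Nat.factorial (j + 4) : ℝ) := by positivity
    have hup : (0:ℝ) ≤ u ^ (j + 2) := by positivity
    have h2 : u ^ 2 * θ * (1 - θ) * u ^ j ≤ θ * u ^ (j + 2) - θ ^ (j + 2) * u ^ (j + 2) := by
      have hexp : u ^ 2 * u ^ j = u ^ (j + 2) := by ring
      nlinarith [mul_le_mul_of_nonneg_right hθpow hup]
    calc u ^ 2 * θ * (1 - θ) * (u ^ j / (Nat.factorial (j + 4) : ℝ))
        = (u ^ 2 * θ * (1 - θ) * u ^ j) / (Nat.factorial (j + 4) : ℝ) := by ring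
      _ ≤ (θ * u ^ (j + 2) - θ ^ (j + 2) * u ^ (j + 2)) / (Nat.factorial (j + 4) : ℝ) :=
          (div_le_div_iff_of_pos_right hfp).mpr h2
      _ = θ * (u ^ (j + 2) / (Nat.factorial (j + 4) : ℝ))
          - θ ^ (j + 2) * u ^ (j + 2) / (Nat.factorial (j + 4) : ℝ) := by ring
  have hsum_le : ∑' j : ℕ, u ^ 2 * θ * (1 - θ) * (u ^ j / (Nat.factorial (j + 4) : ℝ))
      ≤ ∑' j : ℕ, g (j + 2) := by
    apply Summable.tsum_le_tsum hterm ((summable_fSeries 4 u).mul_left _)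
    exact (summable_nat_add_iff 2).2 hg
  rw [hL]
  linarith [hsum_le, hshift.symm.le, hshift.le]

lemma mgf_single_bound {Ω : Type*} [MeasurableSpace Ω] (μ : Measure Ω) [IsProbabilityMeasure μ]
    (Y : Ω → ℝ) (s2 c : ℝ) (hmeas : Measurable Y) (hmean : ∫ ω, Y ω ∂μ = 0)
    (hL2 : MemLp Y 2 μ) (hvar : variance Y μ = s2) (hc : 0 ≤ c)
    (hbdd : ∀ᵐ ω ∂μ, Y ω ≤ c) (l : ℝ) (hl : 0 < l) :
    Real.log (mgf Y μ l) ≤ l ^ 2 * s2 * fSeries 2 (l * c) := by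
  have hint : Integrable (fun ω => Real.exp (l * Y ω)) μ := by
    apply Integrable.mono' (integrable_const (Real.exp (l * c)))
      ((hmeas.const_mul l).exp.aestronglyMeasurable)
    filter_upwards [hbdd] with ω hω
    rw [Real.norm_eq_abs, abs_of_pos (Real.exp_pos _)]
    exact Real.exp_le_exp.2 (mul_le_mul_of_nonneg_left hω hl.le)
  have hptwise : ∀ᵐ ω ∂μ, Real.exp (l * Y ω)
      ≤ 1 + l * Y ω + l ^ 2 * fSeries 2 (l * c) * Y ω ^ 2 := by
    filter_upwards [hbdd] with ω hω
    have := exp_pointwise (u := l * c) (s := l * Y ω) (by positivity)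
      (mul_le_mul_of_nonneg_left hω hl.le)
    calc Real.exp (l * Y ω) ≤ 1 + l * Y ω + (l * Y ω) ^ 2 * fSeries 2 (l * c) := this
      _ = 1 + l * Y ω + l ^ 2 * fSeries 2 (l * c) * Y ω ^ 2 := by ring
  have hY1 : Integrable Y μ := hL2.integrable one_le_two
  have hY2 : Integrable (fun ω => Y ω ^ 2) μ := by
    have := hL2.integrable_sq
    simpa [sq] using this
  have i0 : Integrable (fun _ : Ω => (1:ℝ)) μ := integrable_const 1
  have iY : Integrable (fun ω => l * Y ω) μ := hY1.const_mul l
  have iY2 : Integrable (fun ω => l ^ 2 * fSeries 2 (l * c) * Y ω ^ 2) μ := hY2.const_mul _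
  have i01 : Integrable (fun ω => 1 + l * Y ω) μ := by exact i0.add iY
  have hintR : Integrable (fun ω => 1 + l * Y ω + l ^ 2 * fSeries 2 (l * c) * Y ω ^ 2) μ := by
    exact i01.add iY2
  have hIR : ∫ ω, (1 + l * Y ω + l ^ 2 * fSeries 2 (l * c) * Y ω ^ 2) ∂μ
      = 1 + l ^ 2 * s2 * fSeries 2 (l * c) := by
    rw [integral_add i01 iY2, integral_add i0 iY,
      integral_const_mul, integral_const_mul, integral_const, hmean]
    have hs2 : ∫ ω, Y ω ^ 2 ∂μ = s2 := by
      have h := variance_eq_sub hL2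
      rw [hvar, hmean] at h
      have : μ[Y ^ 2] = ∫ ω, Y ω ^ 2 ∂μ := by rfl
      rw [this] at h
      linarith [h]
    rw [hs2]
    simp
    ring
  have hm : mgf Y μ l ≤ 1 + l ^ 2 * s2 * fSeries 2 (l * c) := by
    rw [mgf, ← hIR]
    exact integral_mono_ae hint hintR hptwise
  have hpos : 0 < mgf Y μ l := mgf_pos hint
  calc Real.log (mgf Y μ l) ≤ mgf Y μ l - 1 := Real.log_le_sub_one_of_pos hpos
    _ ≤ l ^ 2 * s2 * fSeries 2 (l * c) := by linarith

/-- **Lemma 1, main bound.** For independent mean-zero `X i` with variances `σ i ^ 2`,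
`X i ≤ c i` a.s., `c✶ = max c i > 0`, and summaries `v̄`, `K`, `K₁`, for every `λ > 0`:
`(1/n) log 𝔼[exp (λ S_n)] ≤ (1/2) λ² v̄ + λ² K (f₂(λ c✶) − 1/2) − λ⁴ c✶² K₁ f₄(λ c✶)`. -/
theorem lemma_one_mgf_bound
    {Ω : Type*} [MeasurableSpace Ω] (μ : Measure Ω) [IsProbabilityMeasure μ]
    (n : ℕ) (hn : 0 < n) (X : Fin n → Ω → ℝ) (σ c : Fin n → ℝ) (cstar : ℝ)
    (hmeas : ∀ i, Measurable (X i))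
    (hindep : iIndepFun X μ)
    (hmean : ∀ i, ∫ ω, X i ω ∂μ = 0)
    (hL2 : ∀ i, MemLp (X i) 2 μ)
    (hvar : ∀ i, variance (X i) μ = σ i ^ 2)
    (hcnonneg : ∀ i, 0 ≤ c i)
    (hbdd : ∀ i, ∀ᵐ ω ∂μ, X i ω ≤ c i)
    (hcmax : ∀ i, c i ≤ cstar) (hcattained : ∃ i, c i = cstar) (hcpos : 0 < cstar)
    (v K K1 : ℝ)
    (hv : v = (1 / (n : ℝ)) * ∑ i, σ i ^ 2)
    (hK : K = (1 / (n : ℝ)) * ∑ i, σ i ^ 2 * (c i / cstar))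
    (hK1 : K1 = (1 / (n : ℝ)) * ∑ i, σ i ^ 2 * (c i / cstar) * (1 - c i / cstar))
    (l : ℝ) (hl : 0 < l) :
    Real.log (∫ ω, Real.exp (l * ∑ i, X i ω) ∂μ) / (n : ℝ) ≤
      (1 / 2) * l ^ 2 * v + l ^ 2 * K * (fSeries 2 (l * cstar) - 1 / 2) -
        l ^ 4 * cstar ^ 2 * K1 * fSeries 4 (l * cstar) := by
  have hne : (n : ℝ) ≠ 0 := Nat.cast_ne_zero.2 hn.ne'
  have hnpos : (0 : ℝ) < n := Nat.cast_pos.2 hn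
  have hint : ∀ i, Integrable (fun ω => Real.exp (l * X i ω)) μ := by
    intro i
    apply Integrable.mono' (integrable_const (Real.exp (l * c i)))
      ((hmeas i).const_mul l).exp.aestronglyMeasurable
    filter_upwards [hbdd i] with ω hω
    rw [Real.norm_eq_abs, abs_of_pos (Real.exp_pos _)]
    exact Real.exp_le_exp.2 (mul_le_mul_of_nonneg_left hω hl.le)
  have hmgf_eq : ∫ ω, Real.exp (l * ∑ i, X i ω) ∂μ = mgf (∑ i, X i) μ l := by
    rw [mgf]
    congr 1
    ext ω
    simp [Finset.sum_apply]
  have hper : ∀ i, Real.log (mgf (X i) μ l) ≤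
      (1 / 2) * l ^ 2 * σ i ^ 2
      + (l ^ 2 * (fSeries 2 (l * cstar) - 1 / 2)) * (σ i ^ 2 * (c i / cstar))
      - (l ^ 4 * cstar ^ 2 * fSeries 4 (l * cstar))
          * (σ i ^ 2 * (c i / cstar) * (1 - c i / cstar)) := by
    intro i
    have h1 := mgf_single_bound μ (X i) (σ i ^ 2) (c i) (hmeas i) (hmean i) (hL2 i)
      (hvar i) (hcnonneg i) (hbdd i) l hl
    set θ : ℝ := c i / cstar with hθdef
    have hθ0 : 0 ≤ θ := div_nonneg (hcnonneg i) hcpos.le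
    have hθ1 : θ ≤ 1 := div_le_one_of_le₀ (hcmax i) hcpos.le
    have hcu : l * c i = θ * (l * cstar) := by
      rw [hθdef]
      field_simp
    have h2 := key_ineq (u := l * cstar) (θ := θ) (by positivity) hθ0 hθ1
    have hσ : (0:ℝ) ≤ l ^ 2 * σ i ^ 2 := by positivity
    calc Real.log (mgf (X i) μ l) ≤ l ^ 2 * σ i ^ 2 * fSeries 2 (l * c i) := h1
      _ = l ^ 2 * σ i ^ 2 * fSeries 2 (θ * (l * cstar)) := by rw [hcu]
      _ ≤ l ^ 2 * σ i ^ 2 * ((1 - θ) / 2 + θ * fSeries 2 (l * cstar)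
            - (l * cstar) ^ 2 * θ * (1 - θ) * fSeries 4 (l * cstar)) := by
          apply mul_le_mul_of_nonneg_left _ hσ
          linarith [h2]
      _ = (1 / 2) * l ^ 2 * σ i ^ 2
          + (l ^ 2 * (fSeries 2 (l * cstar) - 1 / 2)) * (σ i ^ 2 * θ)
          - (l ^ 4 * cstar ^ 2 * fSeries 4 (l * cstar)) * (σ i ^ 2 * θ * (1 - θ)) := by ring
  have hlog : Real.log (∫ ω, Real.exp (l * ∑ i, X i ω) ∂μ)
      = ∑ i, Real.log (mgf (X i) μ l) := by
    rw [hmgf_eq, hindep.mgf_sum hmeas Finset.univ]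
    exact Real.log_prod (fun i _ => (mgf_pos (hint i)).ne')
  have hsum : ∑ i, Real.log (mgf (X i) μ l) ≤
      ∑ i, ((1 / 2) * l ^ 2 * σ i ^ 2
      + (l ^ 2 * (fSeries 2 (l * cstar) - 1 / 2)) * (σ i ^ 2 * (c i / cstar))
      - (l ^ 4 * cstar ^ 2 * fSeries 4 (l * cstar))
          * (σ i ^ 2 * (c i / cstar) * (1 - c i / cstar))) :=
    Finset.sum_le_sum (fun i _ => hper i)
  have hEq : ∑ i, ((1 / 2) * l ^ 2 * σ i ^ 2
      + (l ^ 2 * (fSeries 2 (l * cstar) - 1 / 2)) * (σ i ^ 2 * (c i / cstar))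
      - (l ^ 4 * cstar ^ 2 * fSeries 4 (l * cstar))
          * (σ i ^ 2 * (c i / cstar) * (1 - c i / cstar)))
      = ((1 / 2) * l ^ 2 * v + l ^ 2 * K * (fSeries 2 (l * cstar) - 1 / 2) -
        l ^ 4 * cstar ^ 2 * K1 * fSeries 4 (l * cstar)) * n := by
    subst hv hK hK1
    rw [Finset.sum_sub_distrib, Finset.sum_add_distrib, ← Finset.mul_sum, ← Finset.mul_sum,
      ← Finset.mul_sum]
    field_simp
  rw [div_le_iff₀ hnpos, hlog]
  calc ∑ i, Real.log (mgf (X i) μ l) ≤ _ := hsum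
    _ = _ := hEq
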